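/- Let U: ℝ³ → ℝ satisfy R₁ U₂ − R₂ U₁ = 0 at R₀, where Uᵢ = ∂U/∂Rᵢ(R₀), and suppose ⟨Ω̃, R₀⟩ (Ω̃ × R₀) = R₀ × ∇U(R₀) for some Ω̃ ∈ ℝ³. Then ⟨Ω̃, R₀⟩ · ⟨Z, Ω̃ × R₀⟩ = 0, where Z = (0,0,1). Hence either ⟨Ω̃, R₀⟩ = 0 (in which case R₀ × ∇U(R₀) = 0, so R₀ is locally central, provided Ω̃ × R₀ ≠ 0), or Ω₁R₂ − Ω₂R₁ = 0. -/

import Mathlib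

open Matrix

theorem locally_central_dichotomy (R₀ Ω F : Fin 3 → ℝ)
    -- `F = ∇U(R₀)` satisfies the axial symmetry condition at `R₀`
    (hsym : R₀ 0 * F 1 - R₀ 1 * F 0 = 0)
    (h : (Ω ⬝ᵥ R₀) • (Ω ⨯₃ R₀) = R₀ ⨯₃ F) :
    (Ω ⬝ᵥ R₀) * ((![0, 0, 1] : Fin 3 → ℝ) ⬝ᵥ (Ω ⨯₃ R₀)) = 0 ∧
    ((Ω ⬝ᵥ R₀ = 0 ∧ (Ω ⨯₃ R₀ ≠ 0 → R₀ ⨯₃ F = 0)) ∨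
      Ω 0 * R₀ 1 - Ω 1 * R₀ 0 = 0) := by
  have h2 := congrFun h 2
  simp [crossProduct, dotProduct, Fin.sum_univ_three] at h2
  have key : (Ω ⬝ᵥ R₀) * ((![0, 0, 1] : Fin 3 → ℝ) ⬝ᵥ (Ω ⨯₃ R₀)) = 0 := by
    simp [crossProduct, dotProduct, Fin.sum_univ_three]
    rcases mul_eq_zero.mp (by linarith : (Ω 0 * R₀ 0 + Ω 1 * R₀ 1 + Ω 2 * R₀ 2) *
      (Ω 0 * R₀ 1 - Ω 1 * R₀ 0) = 0) with h' | h'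
    · exact Or.inl h'
    · exact Or.inr h'
  refine ⟨key, ?_⟩
  rcases eq_or_ne (Ω ⬝ᵥ R₀) 0 with h0 | h0
  · left
    refine ⟨h0, fun _ => ?_⟩
    rw [h0] at h
    simpa using h.symm
  · right
    have hz : (![0, 0, 1] : Fin 3 → ℝ) ⬝ᵥ (Ω ⨯₃ R₀) = 0 :=
      (mul_eq_zero.mp key).resolve_left h0
    simpa [crossProduct, dotProduct, Fin.sum_univ_three] using hz
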